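/- Every Alster topological space is totally Lindelöf. -/

import Mathlib

open Set Topology

/-- A filter base on `X`: a nonempty family of subsets of `X`, not containing `∅`,
closed under pairwise intersections. -/
def FilterBaseOn (X : Type*) (F : Set (Set X)) : Prop :=
  F.Nonempty ∧ ∅ ∉ F ∧ ∀ A ∈ F, ∀ B ∈ F, A ∩ B ∈ F

/-- `F` converges to the set `W`: every open set containing `W` contains a member of `F`. -/
def ConvergesTo {X : Type*} [TopologicalSpace X] (F : Set (Set X)) (W : Set X) : Prop :=
  ∀ U : Set X, IsOpen U → W ⊆ U → ∃ A ∈ F, A ⊆ U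

/-- `F` is total: every filter base extending `F` has nonempty adherence
(intersection of the closures of all its members). -/
def TotalFB {X : Type*} [TopologicalSpace X] (F : Set (Set X)) : Prop :=
  ∀ H : Set (Set X), FilterBaseOn X H → F ⊆ H → (⋂ A ∈ H, closure A).Nonempty

/-- `F` is stable under countable intersections: every countable subfamily of `F`
has a member of `F` contained in its intersection. -/
def StableCI {X : Type*} (F : Set (Set X)) : Prop :=
  ∀ S ⊆ F, S.Countable → ∃ H ∈ F, H ⊆ ⋂₀ S

/-- `F` is ω-closed: the intersection of any nonempty countable subfamily of `F` belongs to `F`. -/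
def OmegaClosedFB {X : Type*} (F : Set (Set X)) : Prop :=
  ∀ S ⊆ F, S.Countable → S.Nonempty → ⋂₀ S ∈ F

/-- `F` is δ-stable: every nonempty countable subfamily of `F` has nonempty intersection. -/
def DeltaStableFB {X : Type*} (F : Set (Set X)) : Prop :=
  ∀ S ⊆ F, S.Countable → S.Nonempty → (⋂₀ S).Nonempty

/-- `G_δ(K)`: the family of Gδ subsets (countable intersections of open sets) containing `K`. -/
def GdeltaNbhds {X : Type*} [TopologicalSpace X] (K : Set X) : Set (Set X) :=
  {G | K ⊆ G ∧ IsGδ G}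

/-- `F ∨ G = {F₀ ∩ F₁ : F₀, F₁ ∈ F ∪ G}`. -/
def joinFB {X : Type*} (F G : Set (Set X)) : Set (Set X) :=
  {A | ∃ F₀ ∈ F ∪ G, ∃ F₁ ∈ F ∪ G, A = F₀ ∩ F₁}

/-- `X` is totally Lindelöf: every filter base stable under countable intersections
extends to a total filter base stable under countable intersections. -/
def TotallyLindelofSpace (X : Type*) [TopologicalSpace X] : Prop :=
  ∀ F : Set (Set X), FilterBaseOn X F → StableCI F →
    ∃ H : Set (Set X), FilterBaseOn X H ∧ StableCI H ∧ F ⊆ H ∧ TotalFB H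

/-- `X` is Alster: every cover of `X` by Gδ sets such that every compact subset of `X`
is contained in a single member admits a countable subcover. -/
def AlsterSpace (X : Type*) [TopologicalSpace X] : Prop :=
  ∀ 𝒢 : Set (Set X), (∀ G ∈ 𝒢, IsGδ G) → (∀ K : Set X, IsCompact K → ∃ G ∈ 𝒢, K ⊆ G) →
    ∃ 𝒞 ⊆ 𝒢, 𝒞.Countable ∧ ⋃₀ 𝒞 = Set.univ

/-- `D` is a discrete subset: each of its points has an open neighborhood meeting `D`
only in that point. -/
def IsDiscreteSubset {X : Type*} [TopologicalSpace X] (D : Set X) : Prop :=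
  ∀ a ∈ D, ∃ U : Set X, IsOpen U ∧ U ∩ D = {a}

/-- The first uncountable ordinal ω₁. -/
noncomputable def omega1 : Ordinal := (Cardinal.aleph 1).ord

theorem stmt2 {X : Type*} [TopologicalSpace X] (hA : AlsterSpace X) :
    TotallyLindelofSpace X := by
  intro F hFB hCI
  obtain ⟨hne, hemptyF, hinterF⟩ := hFB
  -- Key claim: there is a compact set K such that every Gδ set containing K
  -- meets every member of F.
  have key : ∃ K : Set X, IsCompact K ∧
      ∀ G : Set X, IsGδ G → K ⊆ G → ∀ A ∈ F, (G ∩ A).Nonempty := by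
    by_contra hcon
    push_neg at hcon
    set 𝒢 : Set (Set X) := {G | IsGδ G ∧ ∃ A ∈ F, G ∩ A = ∅} with h𝒢def
    obtain ⟨𝒞, h𝒞sub, h𝒞ct, h𝒞cov⟩ := hA 𝒢 (fun G hG => hG.1) (by
      intro K hK
      obtain ⟨G, hGδ, hKG, A, hAF, hGA⟩ := hcon K hK
      exact ⟨G, ⟨hGδ, A, hAF, hGA⟩, hKG⟩)
    choose g hg1 hg2 using fun (G : 𝒞) => (h𝒞sub G.2).2
    have hrange : Set.range g ⊆ F := by rintro _ ⟨G, rfl⟩; exact hg1 G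
    have hrct : (Set.range g).Countable := by
      have := h𝒞ct.to_subtype
      exact Set.countable_range g
    obtain ⟨H₀, hH₀F, hH₀⟩ := hCI (Set.range g) hrange hrct
    have hH₀e : H₀ = ∅ := by
      ext x
      simp only [Set.mem_empty_iff_false, iff_false]
      intro hx
      have hx2 : x ∈ ⋃₀ 𝒞 := h𝒞cov ▸ Set.mem_univ x
      obtain ⟨G, hG𝒞, hxG⟩ := hx2
      have hxg : x ∈ g ⟨G, hG𝒞⟩ := Set.mem_sInter.1 (hH₀ hx) _ (Set.mem_range_self _)
      have hxx : x ∈ (G ∩ g ⟨G, hG𝒞⟩) := ⟨hxG, hxg⟩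
      rw [hg2 ⟨G, hG𝒞⟩] at hxx
      exact hxx
    exact hemptyF (hH₀e ▸ hH₀F)
  obtain ⟨K, hKc, hKey⟩ := key
  set 𝓕 : Set (Set X) := insert Set.univ F with h𝓕def
  have hmem𝓕 : ∀ Fs ∈ 𝓕, ∀ G : Set X, IsGδ G → K ⊆ G → (Fs ∩ G).Nonempty := by
    intro Fs hFs G hGδ hKG
    rcases hFs with h | h
    · subst h
      obtain ⟨A₀, hA₀⟩ := hne
      obtain ⟨x, hx⟩ := hKey G hGδ hKG A₀ hA₀
      exact ⟨x, Set.mem_univ x, hx.1⟩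
    · obtain ⟨x, hx1, hx2⟩ := hKey G hGδ hKG Fs h
      exact ⟨x, hx2, hx1⟩
  have h𝓕inter : ∀ A ∈ 𝓕, ∀ B ∈ 𝓕, A ∩ B ∈ 𝓕 := by
    rintro A (rfl | hA) B (rfl | hB)
    · simp [h𝓕def]
    · rw [Set.univ_inter]; exact Or.inr hB
    · rw [Set.inter_univ]; exact Or.inr hA
    · exact Or.inr (hinterF A hA B hB)
  have hCI𝓕 : StableCI 𝓕 := by
    intro S hS hSc
    obtain ⟨H₀, hH₀F, hH₀⟩ := hCI (S \ {Set.univ})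
      (fun A hA => (hS hA.1).resolve_left hA.2) (hSc.mono Set.diff_subset)
    refine ⟨H₀, Or.inr hH₀F, fun x hx => Set.mem_sInter.2 fun B hB => ?_⟩
    by_cases hB' : B = Set.univ
    · exact hB' ▸ Set.mem_univ x
    · exact Set.mem_sInter.1 (hH₀ hx) B ⟨hB, hB'⟩
  -- The extended filter base
  set H : Set (Set X) := {A | ∃ Fs ∈ 𝓕, ∃ G : Set X, IsGδ G ∧ K ⊆ G ∧ A = Fs ∩ G}
    with hHdef
  have hFH : F ⊆ H := fun A hA =>
    ⟨A, Or.inr hA, Set.univ, IsGδ.univ, Set.subset_univ K, (Set.inter_univ A).symm⟩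
  have hHB : FilterBaseOn X H := by
    refine ⟨⟨Set.univ, Set.univ, Or.inl rfl, Set.univ, IsGδ.univ, Set.subset_univ K,
      (Set.inter_univ _).symm⟩, ?_, ?_⟩
    · rintro ⟨Fs, hFs, G, hGδ, hKG, hEq⟩
      obtain ⟨x, hx⟩ := hmem𝓕 Fs hFs G hGδ hKG
      exact Set.eq_empty_iff_forall_notMem.1 hEq.symm x hx
    · rintro A ⟨F₁, hF₁, G₁, hG₁, hKG₁, rfl⟩ B ⟨F₂, hF₂, G₂, hG₂, hKG₂, rfl⟩
      exact ⟨F₁ ∩ F₂, h𝓕inter F₁ hF₁ F₂ hF₂, G₁ ∩ G₂, hG₁.inter hG₂,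
        Set.subset_inter hKG₁ hKG₂, by ac_rfl⟩
  have hHCI : StableCI H := by
    intro S hS hSc
    have := hSc.to_subtype
    choose f hf g hgδ hgK hfg using fun (A : S) => hS A.2
    obtain ⟨H₀, hH₀𝓕, hH₀⟩ := hCI𝓕 (Set.range f) (by rintro _ ⟨A, rfl⟩; exact hf A)
      (Set.countable_range f)
    refine ⟨H₀ ∩ ⋂ (A : S), g A, ⟨H₀, hH₀𝓕, ⋂ (A : S), g A, IsGδ.iInter hgδ,
      Set.subset_iInter hgK, rfl⟩, fun x hx => Set.mem_sInter.2 fun B hB => ?_⟩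
    rw [show B = f ⟨B, hB⟩ ∩ g ⟨B, hB⟩ from hfg ⟨B, hB⟩]
    exact ⟨Set.mem_sInter.1 (hH₀ hx.1) _ (Set.mem_range_self (f := f) ⟨B, hB⟩),
      Set.mem_iInter.1 hx.2 ⟨B, hB⟩⟩
  refine ⟨H, hHB, hHCI, hFH, ?_⟩
  -- Totality
  intro H' hH'B hHH'
  obtain ⟨hH'ne, hH'empty, hH'inter⟩ := hH'B
  have hmeet : ∀ A ∈ H', (K ∩ closure A).Nonempty := by
    intro A hA
    by_contra hcon
    rw [Set.not_nonempty_iff_eq_empty] at hcon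
    have hU : IsOpen (closure A)ᶜ := isClosed_closure.isOpen_compl
    have hKU : K ⊆ (closure A)ᶜ := fun x hx hx' =>
      Set.eq_empty_iff_forall_notMem.1 hcon x ⟨hx, hx'⟩
    have hUH : Set.univ ∩ (closure A)ᶜ ∈ H' :=
      hHH' ⟨Set.univ, Or.inl rfl, (closure A)ᶜ, hU.isGδ, hKU, rfl⟩
    have hAU : A ∩ (Set.univ ∩ (closure A)ᶜ) ∈ H' := hH'inter A hA _ hUH
    have : A ∩ (Set.univ ∩ (closure A)ᶜ) = ∅ := by
      apply Set.eq_empty_iff_forall_notMem.2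
      rintro x ⟨hx1, _, hx3⟩
      exact hx3 (subset_closure hx1)
    exact hH'empty (this ▸ hAU)
  classical
  have hfin : ∀ u : Finset H', ∃ B ∈ H', B ⊆ ⋂ A ∈ u, (A : Set X) := by
    intro u
    induction u using Finset.induction with
    | empty =>
      obtain ⟨B, hB⟩ := hH'ne
      exact ⟨B, hB, by simp⟩
    | @insert A u hAu ih =>
      obtain ⟨B, hB, hBsub⟩ := ih
      refine ⟨(A : Set X) ∩ B, hH'inter _ A.2 B hB, ?_⟩
      rw [Finset.set_biInter_insert]
      exact Set.subset_inter (Set.inter_subset_left)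
        ((Set.inter_subset_right).trans hBsub)
  have hcpt : (K ∩ ⋂ (A : H'), closure (A : Set X)).Nonempty := by
    apply hKc.inter_iInter_nonempty (fun A : H' => closure (A : Set X))
      (fun A => isClosed_closure)
    intro u
    obtain ⟨B, hB, hBsub⟩ := hfin u
    obtain ⟨x, hxK, hxB⟩ := hmeet B hB
    refine ⟨x, hxK, Set.mem_iInter₂.2 fun A hA => ?_⟩
    exact closure_mono (fun y hy => Set.mem_iInter₂.1 (hBsub hy) A hA) hxB
  obtain ⟨x, _, hx⟩ := hcpt
  exact ⟨x, Set.mem_iInter₂.2 fun A hA => Set.mem_iInter.1 hx ⟨A, hA⟩⟩
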